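/- The dual of a polyhedral map on the torus is again a polyhedral map on the torus, and a map is diminimal if and only if its dual is diminimal. -/

import Mathlib

/-- The setoid on a type given by "same cycle of the permutation `p`". -/
def sameCycleSetoid {D : Type*} (p : Equiv.Perm D) : Setoid D :=
  ⟨p.SameCycle, ⟨fun x => Equiv.Perm.SameCycle.refl p x,
    fun h => h.symm, fun h h' => h.trans h'⟩⟩

/-- The number of cycles (orbits) of a permutation. -/
noncomputable def numCycles {D : Type*} (p : Equiv.Perm D) : ℕ :=
  Nat.card (Quotient (sameCycleSetoid p))

/-- A combinatorial map: a finite set of darts, a vertex-rotation permutation `σ`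
(whose cycles are the vertices with their cyclic order of incident darts), and a
fixed-point-free involution `α` pairing the two darts of each edge.
Faces are the cycles of `σ * α`. -/
structure TorusMap where
  D : Type
  [fin : Fintype D]
  σ : Equiv.Perm D
  α : Equiv.Perm D
  α_invol : ∀ d, α (α d) = d
  α_nofix : ∀ d, α d ≠ d

namespace TorusMap

variable (M : TorusMap)

instance : Fintype M.D := M.fin

/-- The face-tracing permutation. -/
def φ : Equiv.Perm M.D := M.σ * M.α

noncomputable def V : ℕ := numCycles M.σ
noncomputable def E : ℕ := numCycles M.α
noncomputable def F : ℕ := numCycles M.φ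

/-- The embedding lies on the torus: Euler characteristic `V - E + F = 0`. -/
def OnTorus : Prop := (M.V : ℤ) - M.E + M.F = 0

/-- Every vertex has degree at least 3. -/
def DegGe3 : Prop := ∀ d, M.σ d ≠ d ∧ M.σ (M.σ d) ≠ d

/-- Every face has at least 3 sides. -/
def FaceGe3 : Prop := ∀ d, M.φ d ≠ d ∧ M.φ (M.φ d) ≠ d

/-- No loops: the two darts of an edge lie at distinct vertices. -/
def NoLoop : Prop := ∀ d, ¬ M.σ.SameCycle d (M.α d)

/-- No multiple edges: two edges joining the same pair of vertices coincide. -/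
def NoMulti : Prop := ∀ d d', M.σ.SameCycle d d' → M.σ.SameCycle (M.α d) (M.α d') →
  (d' = d ∨ d' = M.α d)

/-- The underlying graph is simple. -/
def Simple : Prop := M.NoLoop ∧ M.NoMulti

/-- All faces are triangles. -/
def Triangular : Prop := ∀ d, M.φ (M.φ (M.φ d)) = d ∧ M.φ d ≠ d

/-- The boundary of each face is a simple closed curve (no repeated vertices). -/
def FaceSimple : Prop := ∀ x y, M.φ.SameCycle x y → M.σ.SameCycle x y → x = y

/-- No face traverses the same edge twice (the two sides of each edge lie on
distinct faces). -/
def FaceNoRepeatEdge : Prop := ∀ x, ¬ M.φ.SameCycle x (M.α x)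

/-- The set of darts of the face containing dart `d`. -/
def faceSet (d : M.D) : Set M.D := {x | M.φ.SameCycle d x}

/-- The vertex (a `σ`-cycle) at which a dart is based. -/
def vtxOf (d : M.D) : Quotient (sameCycleSetoid M.σ) := Quotient.mk _ d

/-- The edge (an `α`-orbit) carrying a dart. -/
def edgeOf (d : M.D) : Quotient (sameCycleSetoid M.α) := Quotient.mk _ d

/-- Vertices common to the faces of darts `d` and `d'`. -/
def sharedVerts (d d' : M.D) : Set (Quotient (sameCycleSetoid M.σ)) :=
  (M.vtxOf '' M.faceSet d) ∩ (M.vtxOf '' M.faceSet d')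

/-- Edges common to the faces of darts `d` and `d'`. -/
def sharedEdges (d d' : M.D) : Set (Quotient (sameCycleSetoid M.α)) :=
  (M.edgeOf '' M.faceSet d) ∩ (M.edgeOf '' M.faceSet d')

/-- Two faces meet properly: their intersection is empty, a single vertex, or a
single edge together with its two endpoints. -/
def MeetProperly (d d' : M.D) : Prop :=
  (M.sharedEdges d d' = ∅ ∧ (M.sharedVerts d d').Subsingleton) ∨
  (∃ e, e ∈ M.faceSet d ∧ M.sharedEdges d d' = {M.edgeOf e} ∧
    M.sharedVerts d d' = {M.vtxOf e, M.vtxOf (M.α e)})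

/-- A polyhedral map: simple graph, minimum degree 3, each face bounded by a
simple closed curve, and any two distinct faces meet properly. -/
def Polyhedral : Prop :=
  M.Simple ∧ M.DegGe3 ∧ M.FaceSimple ∧ M.FaceNoRepeatEdge ∧
    ∀ d d', ¬ M.φ.SameCycle d d' → M.MeetProperly d d'

/-- A toroidal polyhedral map (TPM). -/
def IsTPM : Prop := Nonempty M.D ∧ M.OnTorus ∧ M.Polyhedral

/-- The dual map: vertices and faces are exchanged. -/
def dual : TorusMap := ⟨M.D, M.φ, M.α, M.α_invol, M.α_nofix⟩

end TorusMap

section Skip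
variable {D : Type*} [Fintype D] (p : Equiv.Perm D) (S : Set D)

lemma skip_ex (x : {y : D // y ∉ S}) : ∃ n, 0 < n ∧ p^[n] x.1 ∉ S := by
  refine ⟨orderOf p, orderOf_pos p, ?_⟩
  have h : p ^ orderOf p = 1 := pow_orderOf_eq_one p
  have : p^[orderOf p] x.1 = (p ^ orderOf p) x.1 := by
    rw [← Equiv.Perm.iterate_eq_pow]
  rw [this, h]
  exact x.2

open Classical in
/-- First-return map of the permutation `p` on the complement of `S`. -/
noncomputable def skipFun (x : {y : D // y ∉ S}) : {y : D // y ∉ S} :=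
  ⟨p^[Nat.find (skip_ex p S x)] x.1, (Nat.find_spec (skip_ex p S x)).2⟩

open Classical in
lemma skipFun_inj : Function.Injective (skipFun p S) := by
  classical
  have key : ∀ x y : {y : D // y ∉ S},
      Nat.find (skip_ex p S x) ≤ Nat.find (skip_ex p S y) →
      skipFun p S x = skipFun p S y → x = y := by
    intro x y hmn h
    set m := Nat.find (skip_ex p S x) with hm
    set n := Nat.find (skip_ex p S y) with hn
    have hiter : p^[m] x.1 = p^[n] y.1 := congrArg Subtype.val h
    have hx : x.1 = p^[n - m] y.1 := by
      have : p^[m] x.1 = p^[m] (p^[n - m] y.1) := by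
        rw [← Function.iterate_add_apply, Nat.add_sub_cancel' hmn, hiter]
      exact (p.injective.iterate m) this
    rcases Nat.eq_zero_or_pos (n - m) with h0 | hpos
    · ext
      simp [hx, h0]
    · exfalso
      have hlt : n - m < n := by
        have hm0 : 0 < m := (Nat.find_spec (skip_ex p S x)).1
        omega
      have := Nat.find_min (skip_ex p S y) hlt
      exact this ⟨hpos, by rw [← hx]; exact x.2⟩
  intro x y h
  rcases le_total (Nat.find (skip_ex p S x)) (Nat.find (skip_ex p S y)) with hle | hle
  · exact key x y hle h
  · exact (key y x hle h.symm).symm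

/-- The permutation induced by `p` on the complement of `S` by skipping over `S`. -/
noncomputable def skipPerm : Equiv.Perm {y : D // y ∉ S} :=
  Equiv.ofBijective _ ((Finite.injective_iff_bijective).mp (skipFun_inj p S))

end Skip

namespace TorusMap

lemma alpha_mem (M : TorusMap) (d x : M.D) :
    x ∉ ({d, M.α d} : Set M.D) ↔ M.α x ∉ ({d, M.α d} : Set M.D) := by
  simp only [Set.mem_insert_iff, Set.mem_singleton_iff]
  constructor
  · rintro h h'
    rcases h' with h' | h'
    · exact h (Or.inr (by rw [← h', M.α_invol]))
    · exact h (Or.inl (M.α.injective h'))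
  · rintro h h'
    rcases h' with h' | h'
    · exact h (Or.inr (by rw [h']))
    · exact h (Or.inl (by rw [h', M.α_invol]))

/-- Deletion of the edge carried by the dart `d`: both darts of the edge are
removed, and the rotations at its endpoints skip over them. -/
noncomputable def deleteEdge (M : TorusMap) (d : M.D) : TorusMap where
  D := {x : M.D // x ∉ ({d, M.α d} : Set M.D)}
  fin := Fintype.ofFinite _
  σ := skipPerm M.σ _
  α := M.α.subtypePerm (fun x => (M.alpha_mem d x).symm)
  α_invol := fun x => Subtype.ext (by
    simpa [Equiv.Perm.subtypePerm_apply] using M.α_invol x.1)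
  α_nofix := fun x h => M.α_nofix x.1 (congrArg Subtype.val h)

/-- Contraction of the edge carried by the dart `d` (dual to deletion). -/
noncomputable def contractEdge (M : TorusMap) (d : M.D) : TorusMap :=
  (M.dual.deleteEdge d).dual

/-- `x` is a dart at a vertex of degree exactly 2. -/
def Deg2 (M : TorusMap) (x : M.D) : Prop := M.σ x ≠ x ∧ M.σ (M.σ x) = x

/-- `x` is a dart of a 2-sided face. -/
def Face2 (M : TorusMap) (x : M.D) : Prop := M.φ x ≠ x ∧ M.φ (M.φ x) = x

/-- `CoalesceOf N N'` holds when `N'` is obtained from `N` by repeatedly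
coalescing the two edges at a degree-2 vertex (i.e. contracting one of them)
until no degree-2 vertex remains. -/
inductive CoalesceOf : TorusMap → TorusMap → Prop
  | refl (N : TorusMap) (h : ∀ x : N.D, ¬ N.Deg2 x) : CoalesceOf N N
  | step (N N' : TorusMap) (x : N.D) (hx : N.Deg2 x)
      (h : CoalesceOf (N.contractEdge x) N') : CoalesceOf N N'

/-- `SimplifyOf N N'` holds when `N'` is obtained from `N` by repeatedly
replacing the two edges of a 2-sided face by a single edge (i.e. deleting one
of them) until no 2-sided face remains. -/
inductive SimplifyOf : TorusMap → TorusMap → Prop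
  | refl (N : TorusMap) (h : ∀ x : N.D, ¬ N.Face2 x) : SimplifyOf N N
  | step (N N' : TorusMap) (x : N.D) (hx : N.Face2 x)
      (h : SimplifyOf (N.deleteEdge x) N') : SimplifyOf N N'

/-- An edge is removable if removing it (and coalescing the edges at any
resulting degree-2 vertex) again yields a toroidal polyhedral map. -/
def Removable (M : TorusMap) (d : M.D) : Prop :=
  ∃ N, CoalesceOf (M.deleteEdge d) N ∧ N.IsTPM

/-- An edge is shrinkable if contracting it (and replacing any resulting
2-sided face by a single edge) again yields a toroidal polyhedral map. -/
def Shrinkable (M : TorusMap) (d : M.D) : Prop :=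
  ∃ N, SimplifyOf (M.contractEdge d) N ∧ N.IsTPM

/-- A toroidal polyhedral map is diminimal if it has no removable and no
shrinkable edges. -/
def Diminimal (M : TorusMap) : Prop :=
  M.IsTPM ∧ ∀ d : M.D, ¬ M.Removable d ∧ ¬ M.Shrinkable d

end TorusMap
namespace TorusMap
variable (M : TorusMap)

lemma alpha_sq : M.α * M.α = 1 := Equiv.ext fun d => M.α_invol d

lemma dual_sigma : M.dual.σ = M.φ := rfl
lemma dual_alpha : M.dual.α = M.α := rfl

lemma dual_phi : M.dual.φ = M.σ := by
  show M.σ * M.α * M.α = M.σ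
  rw [mul_assoc, alpha_sq, mul_one]

lemma dual_dual : M.dual.dual = M := by
  cases M with
  | mk D σ α h1 h2 =>
    unfold dual
    congr 1
    · show σ * α * α = σ
      exact Equiv.ext fun d => by simp [h1 d]

end TorusMap
lemma mk_eq_iff {D : Type*} (p : Equiv.Perm D) (x y : D) :
    Quotient.mk (sameCycleSetoid p) x = Quotient.mk (sameCycleSetoid p) y ↔ p.SameCycle x y :=
  ⟨Quotient.exact, fun h => Quotient.sound (by exact h)⟩

namespace TorusMap
variable (M : TorusMap)

lemma alpha_zpow_two : M.α ^ (2 : ℤ) = 1 := by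
  rw [show (2:ℤ) = 1 + 1 from rfl, zpow_add, zpow_one, alpha_sq]

lemma sameCycle_alpha {d d' : M.D} (h : M.α.SameCycle d d') :
    d' = d ∨ d' = M.α d := by
  obtain ⟨n, hn⟩ := h
  rcases Int.even_or_odd n with ⟨k, hk⟩ | ⟨k, hk⟩
  · left
    rw [← hn, hk, show k + k = 2 * k by ring, zpow_mul, alpha_zpow_two, one_zpow]
    rfl
  · right
    rw [← hn, hk, zpow_add, zpow_mul, alpha_zpow_two, one_zpow, zpow_one, one_mul]

lemma sameCycle_alpha_self (e : M.D) : M.α.SameCycle e (M.α e) := ⟨1, by simp⟩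

lemma edgeOf_alpha (e : M.D) : M.edgeOf (M.α e) = M.edgeOf e :=
  ((mk_eq_iff M.α e (M.α e)).mpr (M.sameCycle_alpha_self e)).symm

end TorusMap
lemma sc_apply {D : Type*} (p : Equiv.Perm D) (x : D) : p.SameCycle x (p x) := ⟨1, by simp⟩

namespace TorusMap
variable (M : TorusMap)

lemma dual_edgeOf : M.dual.edgeOf = M.edgeOf := rfl

lemma mem_dual_faceSet {d x : M.D} : x ∈ M.dual.faceSet d ↔ M.σ.SameCycle d x := by
  show M.dual.φ.SameCycle d x ↔ _
  rw [dual_phi]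
  exact Iff.rfl

lemma phi_apply (d : M.D) : M.φ d = M.σ (M.α d) := rfl

lemma phi_alpha (d : M.D) : M.φ (M.α d) = M.σ d := by
  rw [phi_apply, M.α_invol]

lemma noLoop_phi_ne (hnl : M.NoLoop) (d : M.D) : M.φ d ≠ d := by
  intro h
  exact hnl d (Equiv.Perm.SameCycle.symm ⟨1, by simpa [phi_apply] using h⟩)

lemma faceGe3 (hP : M.Polyhedral) : M.FaceGe3 := by
  obtain ⟨⟨hnl, hnm⟩, hdeg, hfs, hfnr, hmeet⟩ := hP
  intro d
  refine ⟨M.noLoop_phi_ne hnl d, ?_⟩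
  intro h2
  have hne : M.φ d ≠ d := M.noLoop_phi_ne hnl d
  have hσ1 : M.σ.SameCycle (M.α d) (M.φ d) := ⟨1, by simp [phi_apply]⟩
  have hσ2 : M.σ.SameCycle (M.α (M.φ d)) d := ⟨1, by simpa [phi_apply] using h2⟩
  rcases hnm d (M.α (M.φ d)) hσ2.symm (by rw [M.α_invol]; exact hσ1) with h | h
  · -- α (φ d) = d, so φ d = α d
    have : M.φ d = M.α d := by
      have h' := congrArg M.α h
      rwa [M.α_invol] at h'
    exact hfnr d ⟨1, by simpa using this⟩
  · -- α (φ d) = α d, so φ d = d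
    exact hne (M.α.injective h)

lemma dual_noMulti (hP : M.Polyhedral) : M.dual.NoMulti := by
  obtain ⟨⟨hnl, hnm⟩, hdeg, hfs, hfnr, hmeet⟩ := hP
  intro x y hxy hxy2
  -- hxy : M.φ.SameCycle x y, hxy2 : M.φ.SameCycle (M.α x) (M.α y)
  have hmem1 : M.edgeOf x ∈ M.sharedEdges x (M.α x) :=
    ⟨⟨x, Equiv.Perm.SameCycle.refl _ _, rfl⟩,
     ⟨M.α x, Equiv.Perm.SameCycle.refl _ _, M.edgeOf_alpha x⟩⟩
  have hmem2 : M.edgeOf y ∈ M.sharedEdges x (M.α x) :=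
    ⟨⟨y, hxy, rfl⟩, ⟨M.α y, hxy2, M.edgeOf_alpha y⟩⟩
  rcases hmeet x (M.α x) (hfnr x) with ⟨hemp, _⟩ | ⟨e, he, hE, hV⟩
  · rw [hemp] at hmem1; exact absurd hmem1 (Set.notMem_empty _)
  · rw [hE] at hmem1 hmem2
    have : M.edgeOf x = M.edgeOf y := by
      rw [Set.mem_singleton_iff] at hmem1 hmem2; rw [hmem1, hmem2]
    exact M.sameCycle_alpha ((mk_eq_iff M.α x y).mp this)

lemma mem_dual_sharedVerts {d d' : M.D} (F : Quotient (sameCycleSetoid M.dual.σ)) :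
    F ∈ M.dual.sharedVerts d d' ↔
      (∃ x, M.σ.SameCycle d x ∧ F = M.dual.vtxOf x) ∧
      (∃ y, M.σ.SameCycle d' y ∧ F = M.dual.vtxOf y) := by
  constructor
  · rintro ⟨⟨x, hx, rfl⟩, ⟨y, hy, hxy⟩⟩
    exact ⟨⟨x, (M.mem_dual_faceSet).mp hx, rfl⟩, ⟨y, (M.mem_dual_faceSet).mp hy, hxy.symm⟩⟩
  · rintro ⟨⟨x, hx, rfl⟩, ⟨y, hy, hxy⟩⟩
    exact ⟨⟨x, (M.mem_dual_faceSet).mpr hx, rfl⟩, ⟨y, (M.mem_dual_faceSet).mpr hy, hxy.symm⟩⟩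

lemma dual_sharedEdges_mem {d d' : M.D} (hdd' : ¬ M.σ.SameCycle d d')
    (E : Quotient (sameCycleSetoid M.dual.α)) :
    E ∈ M.dual.sharedEdges d d' ↔
      ∃ e, M.σ.SameCycle d e ∧ M.σ.SameCycle d' (M.α e) ∧ E = M.edgeOf e := by
  constructor
  · rintro ⟨⟨x, hx, rfl⟩, ⟨y, hy, hxy⟩⟩
    have hx := (M.mem_dual_faceSet).mp hx; have hy := (M.mem_dual_faceSet).mp hy
    rcases M.sameCycle_alpha ((mk_eq_iff M.α y x).mp hxy) with h | h
    · exact absurd (hx.trans (h ▸ hy).symm) hdd'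
    · exact ⟨x, hx, by rw [h, show M.α (M.α y) = y from M.α_invol y]; exact hy, rfl⟩
  · rintro ⟨e, h1, h2, rfl⟩
    exact ⟨⟨e, (M.mem_dual_faceSet).mpr h1, rfl⟩,
           ⟨M.α e, (M.mem_dual_faceSet).mpr h2, M.edgeOf_alpha e⟩⟩

lemma dual_sharedEdges_subsingleton (hnm : M.NoMulti) {d d' : M.D}
    (hdd' : ¬ M.σ.SameCycle d d') : (M.dual.sharedEdges d d').Subsingleton := by
  intro E1 h1 E2 h2
  rw [M.dual_sharedEdges_mem hdd'] at h1 h2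
  obtain ⟨e1, ha1, hb1, rfl⟩ := h1
  obtain ⟨e2, ha2, hb2, rfl⟩ := h2
  rcases hnm e1 e2 (ha1.symm.trans ha2) (hb1.symm.trans hb2) with h | h
  · rw [h]
  · rw [h] at ha2
    exact absurd (ha2.trans hb1.symm) hdd'

end TorusMap
namespace TorusMap
variable (M : TorusMap)

lemma cross_case
    (hmeet : ∀ a b, ¬ M.φ.SameCycle a b → M.MeetProperly a b)
    {d d' x1 y1 x2 y2 : M.D}
    (hdd' : ¬ M.σ.SameCycle d d')
    (hx1 : M.σ.SameCycle d x1) (hy1 : M.σ.SameCycle d' y1) (hf1 : M.φ.SameCycle x1 y1)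
    (hx2 : M.σ.SameCycle d x2) (hy2 : M.σ.SameCycle d' y2) (hf2 : M.φ.SameCycle x2 y2)
    (hne : ¬ M.φ.SameCycle x1 x2) :
    ∃ e', M.φ.SameCycle x1 e' ∧ M.edgeOf e' ∈ M.dual.sharedEdges d d' := by
  have hvx : M.vtxOf x1 = M.vtxOf x2 := (mk_eq_iff M.σ x1 x2).mpr (hx1.symm.trans hx2)
  have hvy : M.vtxOf y1 = M.vtxOf y2 := (mk_eq_iff M.σ y1 y2).mpr (hy1.symm.trans hy2)
  have hvne : M.vtxOf x1 ≠ M.vtxOf y1 := fun h =>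
    hdd' (hx1.trans (((mk_eq_iff M.σ x1 y1).mp h).trans hy1.symm))
  have m1 : M.vtxOf x1 ∈ M.sharedVerts x1 x2 :=
    ⟨⟨x1, Equiv.Perm.SameCycle.refl _ _, rfl⟩,
     ⟨x2, Equiv.Perm.SameCycle.refl _ _, hvx.symm⟩⟩
  have m2 : M.vtxOf y1 ∈ M.sharedVerts x1 x2 := ⟨⟨y1, hf1, rfl⟩, ⟨y2, hf2, hvy.symm⟩⟩
  rcases hmeet x1 x2 hne with ⟨_, hsub⟩ | ⟨e, heF, hEq, hV⟩
  · exact absurd (hsub m1 m2) hvne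
  · rw [hV] at m1 m2
    simp only [Set.mem_insert_iff, Set.mem_singleton_iff] at m1 m2
    rcases m1 with h1 | h1 <;> rcases m2 with h2 | h2
    · exact absurd (h1.trans h2.symm) hvne
    · exact ⟨e, heF, (M.dual_sharedEdges_mem hdd' _).mpr
        ⟨e, hx1.trans ((mk_eq_iff M.σ x1 e).mp h1),
         hy1.trans ((mk_eq_iff M.σ y1 (M.α e)).mp h2), rfl⟩⟩
    · refine ⟨e, heF, (M.dual_sharedEdges_mem hdd' _).mpr
        ⟨M.α e, hx1.trans ((mk_eq_iff M.σ x1 (M.α e)).mp h1), ?_, (M.edgeOf_alpha e).symm⟩⟩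
      rw [M.α_invol]
      exact hy1.trans ((mk_eq_iff M.σ y1 e).mp h2)
    · exact absurd (h1.trans h2.symm) hvne

lemma dual_meet (hP : M.Polyhedral) (d d' : M.D) (hdd'0 : ¬ M.dual.φ.SameCycle d d') :
    M.dual.MeetProperly d d' := by
  have hdd' : ¬ M.σ.SameCycle d d' := by rwa [dual_phi] at hdd'0
  obtain ⟨⟨hnl, hnm⟩, hdeg, hfs, hfnr, hmeet⟩ := hP
  by_cases hE : M.dual.sharedEdges d d' = ∅
  · refine Or.inl ⟨hE, ?_⟩
    intro F1 hF1 F2 hF2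
    rw [M.mem_dual_sharedVerts] at hF1 hF2
    obtain ⟨⟨x1, hx1, rfl⟩, ⟨y1, hy1, hFy1⟩⟩ := hF1
    obtain ⟨⟨x2, hx2, hF2x⟩, ⟨y2, hy2, hFy2⟩⟩ := hF2
    by_contra hneF
    have hf1 : M.φ.SameCycle x1 y1 := Quotient.exact hFy1
    have hf2 : M.φ.SameCycle x2 y2 := Quotient.exact (hF2x.symm.trans hFy2)
    have hne : ¬ M.φ.SameCycle x1 x2 := fun h => hneF (by
      rw [hF2x]
      exact (mk_eq_iff M.dual.σ x1 x2).mpr h)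
    obtain ⟨e', -, hmem⟩ := M.cross_case hmeet hdd' hx1 hy1 hf1 hx2 hy2 hf2 hne
    rw [hE] at hmem
    exact absurd hmem (Set.notMem_empty _)
  · obtain ⟨E0, hE0⟩ := Set.nonempty_iff_ne_empty.mpr hE
    obtain ⟨e, he1, he2, rfl⟩ := (M.dual_sharedEdges_mem hdd' E0).mp hE0
    have hmemE : M.edgeOf e ∈ M.dual.sharedEdges d d' :=
      (M.dual_sharedEdges_mem hdd' _).mpr ⟨e, he1, he2, rfl⟩
    have hsing : M.dual.sharedEdges d d' = {M.dual.edgeOf e} :=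
      Set.eq_singleton_iff_unique_mem.mpr
        ⟨hmemE, fun a ha => M.dual_sharedEdges_subsingleton hnm hdd' ha hmemE⟩
    have hde : M.σ.SameCycle d' (M.φ e) := he2.trans (sc_apply M.σ (M.α e))
    have hdse : M.σ.SameCycle d (M.σ e) := he1.trans (sc_apply M.σ e)
    refine Or.inr ⟨e, (M.mem_dual_faceSet).mpr he1, hsing, ?_⟩
    ext F
    simp only [Set.mem_insert_iff, Set.mem_singleton_iff]
    constructor
    · intro hF
      rw [M.mem_dual_sharedVerts] at hF
      obtain ⟨⟨x, hx, rfl⟩, ⟨y, hy, hFy⟩⟩ := hF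
      have hfxy : M.φ.SameCycle x y := Quotient.exact hFy
      by_contra hc
      push_neg at hc
      obtain ⟨hc1, hc2⟩ := hc
      have hnsc1 : ¬ M.φ.SameCycle x e := fun h => hc1 ((mk_eq_iff M.dual.σ x e).mpr h)
      have hnsc2 : ¬ M.φ.SameCycle x (M.α e) := fun h =>
        hc2 ((mk_eq_iff M.dual.σ x (M.α e)).mpr h)
      obtain ⟨e', hxe', hmem⟩ :=
        M.cross_case hmeet hdd' hx hy hfxy he1 hde (sc_apply M.φ e) hnsc1
      replace hmem : M.edgeOf e' = M.edgeOf e := by rw [hsing] at hmem; exact hmem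
      rcases M.sameCycle_alpha ((mk_eq_iff M.α e' e).mp hmem) with h | h
      · exact hnsc1 (by rw [h]; exact hxe')
      · have he'e : e' = M.α e := by rw [h, M.α_invol]
        exact hnsc2 (by rw [← he'e]; exact hxe')
    · intro hF
      rcases hF with rfl | rfl
      · exact (M.mem_dual_sharedVerts _).mpr
          ⟨⟨e, he1, rfl⟩, ⟨M.φ e, hde, (mk_eq_iff M.dual.σ e (M.φ e)).mpr (sc_apply M.φ e)⟩⟩
      · refine (M.mem_dual_sharedVerts _).mpr
          ⟨⟨M.σ e, hdse, ?_⟩, ⟨M.α e, he2, rfl⟩⟩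
        refine (mk_eq_iff M.dual.σ (M.α e) (M.σ e)).mpr ⟨1, ?_⟩
        rw [zpow_one]
        exact M.phi_alpha e

lemma dual_polyhedral (hP : M.Polyhedral) : M.dual.Polyhedral := by
  obtain ⟨⟨hnl, hnm⟩, hdeg, hfs, hfnr, hmeet⟩ := hP
  refine ⟨⟨hfnr, M.dual_noMulti ⟨⟨hnl, hnm⟩, hdeg, hfs, hfnr, hmeet⟩⟩,
    M.faceGe3 ⟨⟨hnl, hnm⟩, hdeg, hfs, hfnr, hmeet⟩, ?_, ?_,
    M.dual_meet ⟨⟨hnl, hnm⟩, hdeg, hfs, hfnr, hmeet⟩⟩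
  · intro x y h1 h2
    rw [dual_phi] at h1
    exact hfs x y h2 h1
  · intro x h
    rw [dual_phi] at h
    exact hnl x h

lemma dual_onTorus (h : M.OnTorus) : M.dual.OnTorus := by
  unfold OnTorus at *
  have hV : M.dual.V = M.F := rfl
  have hE : M.dual.E = M.E := rfl
  have hF : M.dual.F = M.V := congrArg numCycles (dual_phi M)
  rw [hV, hE, hF]
  linarith

lemma dual_isTPM (h : M.IsTPM) : M.dual.IsTPM :=
  ⟨h.1, M.dual_onTorus h.2.1, M.dual_polyhedral h.2.2⟩

end TorusMap
namespace TorusMap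

lemma deleteEdge_eq_of_eq : ∀ {K L : TorusMap}, K = L → ∀ (x : K.D) (y : L.D), HEq x y →
    K.deleteEdge x = L.deleteEdge y := by
  rintro K L rfl x y h
  cases h
  rfl

lemma dual_dual_deleteEdge (K : TorusMap) (x : K.D) :
    K.dual.dual.deleteEdge x = K.deleteEdge x :=
  deleteEdge_eq_of_eq (dual_dual K) x x HEq.rfl

lemma dual_contractEdge (K : TorusMap) (x : K.D) :
    K.dual.contractEdge x = (K.deleteEdge x).dual := by
  show (K.dual.dual.deleteEdge x).dual = _
  rw [dual_dual_deleteEdge]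

lemma face2_dual_iff (K : TorusMap) (x : K.D) : K.dual.Face2 x ↔ K.Deg2 x := by
  unfold Face2 Deg2
  rw [dual_phi]
  exact Iff.rfl

lemma deg2_dual_iff (K : TorusMap) (x : K.D) : K.dual.Deg2 x ↔ K.Face2 x := Iff.rfl

lemma coalesce_dual {K N : TorusMap} (h : CoalesceOf K N) : SimplifyOf K.dual N.dual := by
  induction h with
  | refl N h =>
    exact SimplifyOf.refl N.dual (fun x hx => h x ((face2_dual_iff N x).mp hx))
  | step N N' x hx h ih =>
    refine SimplifyOf.step N.dual N'.dual x ((face2_dual_iff N x).mpr hx) ?_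
    have heq : (N.contractEdge x).dual = N.dual.deleteEdge x := dual_dual (N.dual.deleteEdge x)
    rw [← heq]
    exact ih

lemma simplify_dual {K N : TorusMap} (h : SimplifyOf K N) : CoalesceOf K.dual N.dual := by
  induction h with
  | refl N h =>
    exact CoalesceOf.refl N.dual (fun x hx => h x ((deg2_dual_iff N x).mp hx))
  | step N N' x hx h ih =>
    refine CoalesceOf.step N.dual N'.dual x ((deg2_dual_iff N x).mpr hx) ?_
    rw [dual_contractEdge]
    exact ih

lemma shrinkable_dual_iff (M : TorusMap) (d : M.D) :
    M.Shrinkable d ↔ M.dual.Removable d := by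
  constructor
  · rintro ⟨N, h, hN⟩
    refine ⟨N.dual, ?_, N.dual_isTPM hN⟩
    have h2 := simplify_dual h
    rwa [show (M.contractEdge d).dual = M.dual.deleteEdge d from dual_dual _] at h2
  · rintro ⟨N, h, hN⟩
    exact ⟨N.dual, coalesce_dual h, N.dual_isTPM hN⟩

lemma removable_dual_iff (M : TorusMap) (d : M.D) :
    M.Removable d ↔ M.dual.Shrinkable d := by
  constructor
  · rintro ⟨N, h, hN⟩
    refine ⟨N.dual, ?_, N.dual_isTPM hN⟩
    have h2 := coalesce_dual h
    rwa [← dual_contractEdge] at h2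
  · rintro ⟨N, h, hN⟩
    rw [dual_contractEdge] at h
    refine ⟨N.dual, ?_, N.dual_isTPM hN⟩
    have h2 := simplify_dual h
    rwa [dual_dual] at h2

end TorusMap

/-- **Duality for toroidal polyhedral maps.**  The dual of a toroidal
polyhedral map is again a toroidal polyhedral map, and a map is diminimal if
and only if its dual is diminimal. -/
theorem dual_TPM_and_diminimal_iff (M : TorusMap) (h : M.IsTPM) :
    M.dual.IsTPM ∧ (M.Diminimal ↔ M.dual.Diminimal) := by
  refine ⟨M.dual_isTPM h, ?_⟩
  constructor
  · rintro ⟨hT, hd⟩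
    refine ⟨M.dual_isTPM hT, fun d => ?_⟩
    obtain ⟨hr, hs⟩ := hd d
    exact ⟨fun hc => hs ((M.shrinkable_dual_iff d).mpr hc),
           fun hc => hr ((M.removable_dual_iff d).mpr hc)⟩
  · rintro ⟨hT, hd⟩
    refine ⟨h, fun d => ?_⟩
    obtain ⟨hr, hs⟩ := hd d
    exact ⟨fun hc => hs ((M.removable_dual_iff d).mp hc),
           fun hc => hr ((M.shrinkable_dual_iff d).mp hc)⟩
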